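/- Let $K = \mathbb{F}_q$ be a finite field, let $\mathbb{A}^s = K^s$, and let $G$ be a finite set of polynomials of $S = K[t_1,\ldots,t_s]$. If $X = V_{\mathbb{A}^s}(G)$ and $(I(\mathbb{A}^s) : (G)) \neq I(\mathbb{A}^s)$, then $(t_1^q - t_1, \ldots, t_s^q - t_s, G) = I(X)$. -/

import Mathlib

open MvPolynomial
open scoped MonomialOrder

variable {K : Type*} [Field K] {s : ℕ}

/-- The exponent of the initial (leading) monomial of `f` with respect to the
monomial order `m` (it is `0` for `f = 0`). -/
noncomputable def leadExp (m : MonomialOrder (Fin s)) (f : MvPolynomial (Fin s) K) :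
    Fin s →₀ ℕ :=
  m.toSyn.symm (f.support.sup fun a => m.toSyn a)

/-- The coefficient of the initial monomial of `f`; `f` is monic when this is `1`. -/
noncomputable def leadCoeff (m : MonomialOrder (Fin s)) (f : MvPolynomial (Fin s) K) : K :=
  f.coeff (leadExp m f)

/-- The initial monomial `in_≺(f)` of `f`, as a (monic) monomial of the polynomial ring. -/
noncomputable def leadMon (m : MonomialOrder (Fin s)) (f : MvPolynomial (Fin s) K) :
    MvPolynomial (Fin s) K :=
  monomial (leadExp m f) (1 : K)

/-- The initial ideal `in_≺(I)` of an ideal `I`: the ideal generated by the initial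
monomials of the nonzero elements of `I`. -/
noncomputable def initialIdeal (m : MonomialOrder (Fin s)) (I : Ideal (MvPolynomial (Fin s) K)) :
    Ideal (MvPolynomial (Fin s) K) :=
  Ideal.span { g | ∃ f ∈ I, f ≠ 0 ∧ g = leadMon m f }

/-- The footprint `Δ_≺(I)` of `S/I`: the set of standard monomials, i.e. the (monic)
monomials that do not belong to the initial ideal of `I`. -/
noncomputable def stdMonomials (m : MonomialOrder (Fin s)) (I : Ideal (MvPolynomial (Fin s) K)) :
    Set (MvPolynomial (Fin s) K) :=
  { g | (∃ a : Fin s →₀ ℕ, g = monomial a (1 : K)) ∧ g ∉ initialIdeal m I }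

/-- `KΔ_≺(I)`, the `K`-linear span of the standard monomials of `S/I`. -/
noncomputable def stdSpan (m : MonomialOrder (Fin s)) (I : Ideal (MvPolynomial (Fin s) K)) :
    Submodule K (MvPolynomial (Fin s) K) :=
  Submodule.span K (stdMonomials m I)

/-- A monomial order is graded if monomials are first compared by their total degrees. -/
def IsGradedOrder (m : MonomialOrder (Fin s)) : Prop :=
  ∀ a b : Fin s →₀ ℕ, a.degree < b.degree → a ≺[m] b

/-- The vanishing ideal `I(X)` of a set of points `X ⊆ 𝔸^s = K^s`. -/
def affVanishingIdeal (X : Set (Fin s → K)) : Ideal (MvPolynomial (Fin s) K) where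
  carrier := { f | ∀ x ∈ X, eval x f = 0 }
  add_mem' := by
    intro a b ha hb x hx
    simp [ha x hx, hb x hx]
  zero_mem' := by intro x hx; simp
  smul_mem' := by
    intro c f hf x hx
    simp [smul_eq_mul, hf x hx]

/-- The evaluation map `S → K^X`, `f ↦ (f(P₁),…,f(P_m))`, at the points of a finite
set `X` of points of `𝔸^s`. -/
noncomputable def evalMap (X : Finset (Fin s → K)) :
    MvPolynomial (Fin s) K →ₗ[K] (X → K) where
  toFun f := fun x => eval (x : Fin s → K) f
  map_add' f g := by funext x; simp
  map_smul' c f := by funext x; simp [Algebra.smul_def]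

/-- The degree `deg(S/I)`.  For the ideals considered in this paper `S/I` is a
zero-dimensional ring, and its degree (the normalized leading coefficient of the
affine Hilbert polynomial) equals `dim_K (S/I)` (and is `0` when `I = S`). -/
noncomputable def adeg (I : Ideal (MvPolynomial (Fin s) K)) : ℕ :=
  Module.finrank K (MvPolynomial (Fin s) K ⧸ I)

/-- The affine Hilbert function `H_I^a(d) = dim_K (S_{≤d}/I_{≤d})`, computed as the
dimension of the image of `S_{≤d}` in `S/I`. -/
noncomputable def affineHilbert (I : Ideal (MvPolynomial (Fin s) K)) (d : ℕ) : ℕ :=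
  Module.finrank K
    ((restrictTotalDegree (Fin s) K d).map (Submodule.restrictScalars K I).mkQ)

/-- The support `χ(D)` of a subcode `D ⊆ K^ι`. -/
def codeSupport {ι : Type*} (D : Submodule K (ι → K)) : Set ι :=
  { i | ∃ v ∈ D, v i ≠ 0 }

/-- The `r`-th generalized Hamming weight of a linear code `C ⊆ K^ι`: the minimum
size of the support of an `r`-dimensional subcode. -/
noncomputable def ghw {ι : Type*} (C : Submodule K (ι → K)) (r : ℕ) : ℕ :=
  sInf { n | ∃ D : Submodule K (ι → K),
    D ≤ C ∧ Module.finrank K (↥D) = r ∧ (codeSupport D).ncard = n }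

/-- The minimum distance of a linear code: the least Hamming weight of a nonzero
codeword. -/
noncomputable def minDist {ι : Type*} (C : Submodule K (ι → K)) : ℕ :=
  sInf { n | ∃ v ∈ C, v ≠ 0 ∧ ({ i : ι | v i ≠ 0 }).ncard = n }

/-- The affine torus `T = (K^*)^s`. -/
noncomputable def torus (K : Type*) [Field K] [Fintype K] (s : ℕ) : Finset (Fin s → K) :=
  letI := Classical.decEq K
  Finset.univ.filter fun x => ∀ i, x i ≠ 0

/-- `V_d`: the set of squarefree (monic) monomials of degree `d`. -/
def sqfreeMonomials (K : Type*) [Field K] (s d : ℕ) : Set (MvPolynomial (Fin s) K) :=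
  { g | ∃ a : Fin s →₀ ℕ, (∀ i, a i ≤ 1) ∧ a.degree = d ∧ g = monomial a (1 : K) }

/-- `V_{≤d}`: the set of squarefree (monic) monomials of degree at most `d`. -/
def sqfreeMonomialsLe (K : Type*) [Field K] (s d : ℕ) : Set (MvPolynomial (Fin s) K) :=
  { g | ∃ a : Fin s →₀ ℕ, (∀ i, a i ≤ 1) ∧ a.degree ≤ d ∧ g = monomial a (1 : K) }

section NullstellensatzAux

variable [Fintype K]

/-- The ideal generated by the field equations `t_i^q - t_i`. -/
noncomputable def fieldIdeal (K : Type*) [Field K] [Fintype K] (s : ℕ) :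
    Ideal (MvPolynomial (Fin s) K) :=
  Ideal.span (Set.range fun j : Fin s =>
    (X j : MvPolynomial (Fin s) K) ^ Fintype.card K - X j)

lemma eval_eq_zero_of_mem_fieldIdeal {f : MvPolynomial (Fin s) K}
    (hf : f ∈ fieldIdeal K s) (x : Fin s → K) : eval x f = 0 := by
  have h : fieldIdeal K s ≤ RingHom.ker (eval x) := by
    rw [fieldIdeal, Ideal.span_le]
    rintro _ ⟨j, rfl⟩
    simp [RingHom.mem_ker, FiniteField.pow_card]
  exact h hf

lemma degree_single_aux {i : Fin s} {m : ℕ} : (Finsupp.single i m).degree = m := by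
  rcases eq_or_ne m 0 with rfl | hm
  · simp [Finsupp.degree]
  · rw [Finsupp.degree_apply, Finsupp.support_single_ne_zero _ hm]
    simp

lemma monomial_red (n : ℕ) : ∀ a : Fin s →₀ ℕ, a.degree ≤ n →
    ∃ b : Fin s →₀ ℕ, (∀ i, b i ≤ Fintype.card K - 1) ∧
      (monomial a (1 : K) - monomial b 1) ∈ fieldIdeal K s := by
  induction n using Nat.strong_induction_on with
  | _ n ih =>
    intro a ha
    by_cases hb : ∀ i, a i ≤ Fintype.card K - 1
    · exact ⟨a, hb, by simp⟩
    · push_neg at hb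
      obtain ⟨i, hi⟩ := hb
      have hq : 2 ≤ Fintype.card K := Fintype.one_lt_card
      have hiq : Fintype.card K ≤ a i := by omega
      have hle : Finsupp.single i (Fintype.card K) ≤ a := by
        rw [Finsupp.single_le_iff]; exact hiq
      set c := a - Finsupp.single i (Fintype.card K) with hc
      have hca : c + Finsupp.single i (Fintype.card K) = a := tsub_add_cancel_of_le hle
      set a' := c + Finsupp.single i 1 with ha'
      have hdeg : ∀ u v : Fin s →₀ ℕ, (u + v).degree = u.degree + v.degree := fun u v => by
        simp [Finsupp.degree_eq_weight_one, map_add]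
      have hda : a.degree = c.degree + Fintype.card K := by
        rw [← hca, hdeg, degree_single_aux]
      have hda' : a'.degree = c.degree + 1 := by
        rw [ha', hdeg, degree_single_aux]
      have hlt : a'.degree < n := by omega
      obtain ⟨b, hb1, hb2⟩ := ih a'.degree hlt a' le_rfl
      refine ⟨b, hb1, ?_⟩
      have key : (monomial a (1 : K) - monomial a' 1) =
          monomial c 1 * ((X i) ^ Fintype.card K - X i) := by
        rw [mul_sub, X_pow_eq_monomial, X, monomial_mul, monomial_mul, hca.symm, ha']
        simp
      have h1 : (monomial a (1 : K) - monomial a' 1) ∈ fieldIdeal K s := by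
        rw [key]
        exact Ideal.mul_mem_left _ _ (Ideal.subset_span ⟨i, rfl⟩)
      have := Ideal.add_mem _ h1 hb2
      simpa using this

lemma exists_red (f : MvPolynomial (Fin s) K) :
    ∃ r ∈ restrictDegree (Fin s) K (Fintype.card K - 1), f - r ∈ fieldIdeal K s := by
  induction f using MvPolynomial.induction_on' with
  | monomial u a =>
    obtain ⟨b, hb1, hb2⟩ := monomial_red (K := K) u.degree u le_rfl
    refine ⟨monomial b a, ?_, ?_⟩
    · rw [mem_restrictDegree]
      intro t ht i
      have := MvPolynomial.support_monomial_subset ht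
      simp only [Finset.mem_singleton] at this
      subst this
      exact hb1 i
    · have : monomial u a - monomial b a = C a * (monomial u (1 : K) - monomial b 1) := by
        rw [mul_sub, C_mul_monomial, C_mul_monomial, mul_one]
      rw [this]
      exact Ideal.mul_mem_left _ _ hb2
  | add p q hp hq =>
    obtain ⟨r1, hr1, hp1⟩ := hp
    obtain ⟨r2, hr2, hq2⟩ := hq
    refine ⟨r1 + r2, Submodule.add_mem _ hr1 hr2, ?_⟩
    have : p + q - (r1 + r2) = (p - r1) + (q - r2) := by ring
    rw [this]
    exact Ideal.add_mem _ hp1 hq2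

universe uK in
lemma eval_zero_aux {L : Type uK} [Field L] [Fintype L] {s : ℕ}
    {p : MvPolynomial (Fin s) L}
    (hp : p ∈ restrictDegree (Fin s) L (Fintype.card L - 1))
    (h : ∀ v : Fin s → L, eval v p = 0) : p = 0 := by
  letI : Small.{0} L := Countable.toSmall L
  let e : Shrink.{0} L ≃+* L := Shrink.ringEquiv.{0, uK} L
  letI : Fintype (Shrink.{0} L) := Fintype.ofEquiv L e.toEquiv.symm
  have hcard : Fintype.card (Shrink.{0} L) = Fintype.card L :=
    Fintype.card_congr e.toEquiv
  set φ : L →+* Shrink.{0} L := e.symm.toRingHom with hφ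
  have hinj : Function.Injective φ := e.symm.injective
  have hmap : MvPolynomial.map φ p = 0 := by
    apply MvPolynomial.eq_zero_of_eval_eq_zero (Fin s) (Shrink.{0} L)
    · intro v
      have h1 : eval v (MvPolynomial.map φ p) = eval₂ φ v p := by
        rw [MvPolynomial.eval_map]
      have h2 : e (eval₂ φ v p) = eval₂ (e.toRingHom.comp φ) (fun i => e (v i)) p :=
        MvPolynomial.eval₂_comp_left e.toRingHom φ v p
      have h3 : e.toRingHom.comp φ = RingHom.id L := by
        ext x; simp [hφ]
      rw [h3] at h2
      have h4 : eval₂ (RingHom.id L) (fun i => e (v i)) p = eval (fun i => e (v i)) p := rfl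
      rw [h4, h (fun i => e (v i))] at h2
      have : eval₂ φ v p = 0 := by
        apply e.injective
        rw [h2, map_zero]
      rw [h1, this]
    · rw [mem_restrictDegree]
      intro t ht i
      have hsub := MvPolynomial.support_map_subset φ p ht
      rw [mem_restrictDegree] at hp
      rw [hcard]
      exact hp t hsub i
  exact MvPolynomial.map_injective φ hinj (by rw [hmap, map_zero])

lemma mem_fieldIdeal_of_vanish {f : MvPolynomial (Fin s) K}
    (hf : ∀ x : Fin s → K, eval x f = 0) : f ∈ fieldIdeal K s := by
  obtain ⟨r, hr, hfr⟩ := exists_red f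
  have hrv : ∀ x : Fin s → K, eval x r = 0 := by
    intro x
    have h := eval_eq_zero_of_mem_fieldIdeal hfr x
    rw [map_sub, hf x, zero_sub, neg_eq_zero] at h
    exact h
  have hr0 : r = 0 := eval_zero_aux hr hrv
  rw [hr0, sub_zero] at hfr
  exact hfr

lemma mem_affVanishingIdeal {X : Set (Fin s → K)} {f : MvPolynomial (Fin s) K} :
    f ∈ affVanishingIdeal X ↔ ∀ x ∈ X, eval x f = 0 := Iff.rfl

end NullstellensatzAux

/-- Proposition (Hilbert's Nullstellensatz over a finite field): if
`X = V_{𝔸^s}(G)` and `(I(𝔸^s) : (G)) ≠ I(𝔸^s)`, then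
`(t₁^q - t₁, …, t_s^q - t_s, G) = I(X)`. -/
theorem nullstellensatz_finite_field [Fintype K] (G : Finset (MvPolynomial (Fin s) K))
    (hcol : Submodule.colon (affVanishingIdeal (Set.univ : Set (Fin s → K)))
        (Ideal.span (G : Set (MvPolynomial (Fin s) K))) ≠
      affVanishingIdeal (Set.univ : Set (Fin s → K))) :
    Ideal.span ((Set.range fun j : Fin s =>
        (X j : MvPolynomial (Fin s) K) ^ Fintype.card K - X j) ∪
        (G : Set (MvPolynomial (Fin s) K))) =
      affVanishingIdeal { x : Fin s → K | ∀ g ∈ G, eval x g = 0 } := by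
  classical
  set Xs : Set (Fin s → K) := { x : Fin s → K | ∀ g ∈ G, eval x g = 0 } with hXs
  set J : Ideal (MvPolynomial (Fin s) K) := Ideal.span ((Set.range fun j : Fin s =>
      (X j : MvPolynomial (Fin s) K) ^ Fintype.card K - X j) ∪
      (G : Set (MvPolynomial (Fin s) K))) with hJ
  have hFI : fieldIdeal K s ≤ J := by
    rw [fieldIdeal, hJ]
    exact Ideal.span_mono Set.subset_union_left
  have hGJ : ∀ g ∈ G, g ∈ J := fun g hg =>
    Ideal.subset_span (Set.subset_union_right hg)
  apply le_antisymm
  · rw [Ideal.span_le]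
    rintro f (⟨j, rfl⟩ | hG)
    · intro x hx
      simp [FiniteField.pow_card]
    · intro x hx
      exact hx f hG
  · intro f hf
    -- f vanishes on Xs
    have hfv : ∀ x ∈ Xs, eval x f = 0 := hf
    -- decompose f via indicators
    have hvan : ∀ x : Fin s → K,
        eval x (f - ∑ a : Fin s → K, C (eval a f) * MvPolynomial.indicator a) = 0 := by
      intro x
      rw [map_sub, map_sum]
      have hsum : ∑ a : Fin s → K, eval x (C (eval a f) * MvPolynomial.indicator a)
          = eval x f := by
        rw [Finset.sum_eq_single x]
        · simp [MvPolynomial.eval_indicator_apply_eq_one]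
        · intro b _ hb
          simp [MvPolynomial.eval_indicator_apply_eq_zero x b (Ne.symm hb)]
        · simp
      rw [hsum, sub_self]
    have h1 : f - ∑ a : Fin s → K, C (eval a f) * MvPolynomial.indicator a ∈ J :=
      hFI (mem_fieldIdeal_of_vanish hvan)
    have h2 : ∀ a : Fin s → K, C (eval a f) * MvPolynomial.indicator a ∈ J := by
      intro a
      by_cases ha : a ∈ Xs
      · rw [hfv a ha, map_zero, zero_mul]
        exact J.zero_mem
      · -- there is g ∈ G with eval a g ≠ 0
        rw [hXs, Set.mem_setOf_eq] at ha
        push_neg at ha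
        obtain ⟨g, hg, hga⟩ := ha
        have hind : MvPolynomial.indicator a -
            C (eval a g)⁻¹ * g * MvPolynomial.indicator a ∈ fieldIdeal K s := by
          apply mem_fieldIdeal_of_vanish
          intro x
          by_cases hx : x = a
          · subst hx
            simp [MvPolynomial.eval_indicator_apply_eq_one, inv_mul_cancel₀ hga]
          · simp [MvPolynomial.eval_indicator_apply_eq_zero x a hx]
        have hterm : C (eval a g)⁻¹ * g * MvPolynomial.indicator a ∈ J :=
          Ideal.mul_mem_right _ _ (Ideal.mul_mem_left _ _ (hGJ g hg))
        have hindJ : MvPolynomial.indicator a ∈ J := by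
          have := Ideal.add_mem _ (hFI hind) hterm
          simpa using this
        exact Ideal.mul_mem_left _ _ hindJ
    have h3 : ∑ a : Fin s → K, C (eval a f) * MvPolynomial.indicator a ∈ J :=
      Ideal.sum_mem _ fun a _ => h2 a
    have := Ideal.add_mem _ h1 h3
    simpa using this
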